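/- Let P be a phylogenetic collection of partitions of N, and define the graph G_P with vertex set N ∪ P as follows: p, q ∈ P are adjacent iff there is a set A with A ∈ p and N\A ∈ q; p ∈ P and i ∈ N are adjacent iff {i} ∈ p; no two elements of N are adjacent. Then G_P is acyclic. -/

import Mathlib

open Set

/-- A phylogenetic collection of partitions of (the finite set) `α`:
(P1) every partition has at least 3 parts; (P2) every singleton is a part of some
partition; (P3) every subset is a part of at most one partition; (P4) the complement of
every part of cardinality at least 2 is also a part of some partition. -/
def IsPhyloP {α : Type*} (P : Set (Set (Set α))) : Prop :=
  (∀ p ∈ P, Setoid.IsPartition p ∧ 3 ≤ p.ncard) ∧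
  (∀ i : α, ∃ p ∈ P, ({i} : Set α) ∈ p) ∧
  (∀ A : Set α, ∀ p ∈ P, ∀ q ∈ P, A ∈ p → A ∈ q → p = q) ∧
  (∀ p ∈ P, ∀ A ∈ p, 2 ≤ A.ncard → ∃ q ∈ P, Aᶜ ∈ q)

/-- The adjacency relation of the graph `G_P` on the vertex set `N ∪ P`:
two partitions `p, q` are adjacent iff there is a set `A` with `A ∈ p` and `N \ A ∈ q`;
a partition `p` and an element `i` are adjacent iff `{i} ∈ p`; no two elements of `N`
are adjacent. -/
def GPAdj {α : Type*} (P : Set (Set (Set α))) : α ⊕ ↥P → α ⊕ ↥P → Prop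
  | Sum.inl _, Sum.inl _ => False
  | Sum.inl i, Sum.inr p => ({i} : Set α) ∈ p.1
  | Sum.inr p, Sum.inl i => ({i} : Set α) ∈ p.1
  | Sum.inr p, Sum.inr q => p ≠ q ∧ ∃ A : Set α, A ∈ p.1 ∧ Aᶜ ∈ q.1

/-- The graph `G_P` with vertex set `N ∪ P`. -/
def GP {α : Type*} (P : Set (Set (Set α))) : SimpleGraph (α ⊕ ↥P) where
  Adj := GPAdj P
  symm := by
    constructor
    rintro (i | p) (j | q) h
    · exact h.elim
    · exact h
    · exact h
    · obtain ⟨hne, A, hA, hAc⟩ := h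
      exact ⟨hne.symm, Aᶜ, hAc, by rwa [compl_compl]⟩
  loopless := by
    constructor
    rintro (i | p) h
    · exact h
    · exact h.1 rfl

section Aux

open SimpleGraph Walk Sum

variable {α : Type*} {P : Set (Set (Set α))}

open scoped Classical in
noncomputable def gset (P : Set (Set (Set α))) : (α ⊕ ↥P) → (α ⊕ ↥P) → Set α
  | Sum.inr p, Sum.inr q =>
      if h : ∃ A : Set α, A ∈ p.1 ∧ Aᶜ ∈ q.1 then (h.choose)ᶜ else ∅
  | _, _ => ∅

lemma gset_spec {p q : ↥P} (h : (GP P).Adj (Sum.inr p) (Sum.inr q)) :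
    gset P (Sum.inr p) (Sum.inr q) ∈ q.1 ∧ (gset P (Sum.inr p) (Sum.inr q))ᶜ ∈ p.1 := by
  have h' : p ≠ q ∧ ∃ A : Set α, A ∈ p.1 ∧ Aᶜ ∈ q.1 := h
  have hex := h'.2
  simp only [gset, dif_pos hex]
  exact ⟨hex.choose_spec.2, by rw [compl_compl]; exact hex.choose_spec.1⟩

lemma part_eq {s : Set (Set α)} (hs : Setoid.IsPartition s) {A B : Set α}
    (hA : A ∈ s) (hB : B ∈ s) {x : α} (hxA : x ∈ A) (hxB : x ∈ B) : A = B :=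
  (hs.2 x).unique ⟨hA, hxA⟩ ⟨hB, hxB⟩

lemma key3 (hP : IsPhyloP P) {x y z : α ⊕ ↥P} (hxy : (GP P).Adj x y)
    (hyz : (GP P).Adj y z) (hxz : x ≠ z)
    (hx : ∃ p : ↥P, x = Sum.inr p) (hy : ∃ p : ↥P, y = Sum.inr p)
    (hz : ∃ p : ↥P, z = Sum.inr p) :
    gset P x y ⊂ gset P y z := by
  obtain ⟨p, rfl⟩ := hx
  obtain ⟨q, rfl⟩ := hy
  obtain ⟨r, rfl⟩ := hz
  obtain ⟨hS, hSc⟩ := gset_spec hxy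
  obtain ⟨hT, hTc⟩ := gset_spec hyz
  set S := gset P (Sum.inr p) (Sum.inr q) with hSdef
  set T := gset P (Sum.inr q) (Sum.inr r) with hTdef
  have hpartq : Setoid.IsPartition q.1 := (hP.1 q.1 q.2).1
  have P3 := hP.2.2.1
  have hqr : q ≠ r := by
    have h' : q ≠ r ∧ ∃ A : Set α, A ∈ q.1 ∧ Aᶜ ∈ r.1 := hyz
    exact h'.1
  have hne1 : Tᶜ ≠ S := by
    intro he
    have hT2 : T = Sᶜ := by rw [← he, compl_compl]
    have : p.1 = r.1 := P3 Sᶜ p.1 p.2 r.1 r.2 hSc (hT2 ▸ hT)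
    exact hxz (by rw [Subtype.ext this])
  have hsub : S ⊆ T := by
    intro a ha
    by_contra ha2
    exact hne1 (part_eq hpartq hTc hS ha2 ha)
  refine ssubset_of_subset_of_ne hsub ?_
  intro he
  have : q.1 = r.1 := P3 T q.1 q.2 r.1 r.2 (he ▸ hS) hT
  exact hqr (Subtype.ext this)

lemma loop_len {V : Type*} {G : SimpleGraph V} {u : V} (w : G.Walk u u)
    (h : w.support.Nodup) : w.length = 0 := by
  cases w with
  | nil => rfl
  | cons h2 w' =>
    exfalso
    rw [Walk.support_cons] at h
    exact (List.nodup_cons.1 h).1 w'.end_mem_support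

lemma chain (hP : IsPhyloP P) {u v : α ⊕ ↥P} (w : (GP P).Walk u v) :
    ∀ {z : α ⊕ ↥P} (h : (GP P).Adj z u), (Walk.cons h w).IsPath →
    (∀ x ∈ (Walk.cons h w).support, ∃ p : ↥P, x = Sum.inr p) →
    ∃ d, (GP P).Adj d v ∧ gset P z u ⊆ gset P d v ∧ ((d = z ∧ w.Nil) ∨ d ∈ w.support) := by
  induction w with
  | nil =>
    intro z h _ _
    exact ⟨z, h, subset_rfl, Or.inl ⟨rfl, Walk.Nil.nil⟩⟩
  | @cons u b v h2 w' ih =>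
    intro z h hpath hall
    have hzb : z ≠ b := by
      have hz : z ∉ (Walk.cons h2 w').support := ((Walk.cons_isPath_iff _ _).1 hpath).2
      intro he
      exact hz (by rw [he, Walk.support_cons]; exact List.mem_cons_of_mem _ w'.start_mem_support)
    have hmem' : ∀ x ∈ (Walk.cons h2 w').support, ∃ p : ↥P, x = Sum.inr p := by
      intro x hx
      exact hall x (by rw [Walk.support_cons]; exact List.mem_cons_of_mem _ hx)
    have s1 : gset P z u ⊂ gset P u b :=
      key3 hP h h2 hzb
        (hall z (by rw [Walk.support_cons]; exact List.mem_cons_self))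
        (hall u (by rw [Walk.support_cons, Walk.support_cons]
                    exact List.mem_cons_of_mem _ (List.mem_cons_self)))
        (hmem' b (by rw [Walk.support_cons]; exact List.mem_cons_of_mem _ w'.start_mem_support))
    obtain ⟨d, hd, hsub, hm⟩ := ih h2 hpath.of_cons hmem'
    refine ⟨d, hd, s1.subset.trans hsub, Or.inr ?_⟩
    rw [Walk.support_cons]
    rcases hm with ⟨rfl, _⟩ | hdw
    · exact List.mem_cons_self
    · exact List.mem_cons_of_mem _ hdw

end Aux

/-- for a phylogenetic collection of partitions `P`, the graph `G_P` is
acyclic. -/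
theorem stmt7 {α : Type*} [Fintype α] (hcard : 3 ≤ Fintype.card α)
    (P : Set (Set (Set α))) (hP : IsPhyloP P) : (GP P).IsAcyclic := by
  classical
  intro v c hc
  have hinl : ∀ (i : α) (cyc : (GP P).Walk (Sum.inl i) (Sum.inl i)), ¬ cyc.IsCycle := by
    intro i cyc hcyc
    rcases cyc with _ | ⟨h, w⟩
    · exact hcyc.ne_nil rfl
    · rename_i y
      cases y with
      | inl j => exact h
      | inr p =>
        have hip : ({i} : Set α) ∈ p.1 := h
        have hwpath : w.IsPath := by
          apply SimpleGraph.Walk.IsPath.mk'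
          have := hcyc.support_nodup
          rwa [SimpleGraph.Walk.support_cons, List.tail_cons] at this
        have hwr := hwpath.reverse
        obtain ⟨y2, h2, w2, hwe⟩ := SimpleGraph.Walk.not_nil_iff.1
          (SimpleGraph.Walk.not_nil_of_ne (by simp) : ¬ w.reverse.Nil)
        · cases y2 with
          | inl j => exact h2
          | inr q =>
            have hiq : ({i} : Set α) ∈ q.1 := h2
            have hpq : p = q :=
              Subtype.ext (hP.2.2.1 {i} p.1 p.2 q.1 q.2 hip hiq)
            subst hpq
            rw [hwe] at hwr
            have hw2 : w2.length = 0 :=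
              loop_len w2 hwr.of_cons.support_nodup
            have h3 := hcyc.three_le_length
            have hwl : w.length = 1 := by
              rw [← SimpleGraph.Walk.length_reverse, hwe, SimpleGraph.Walk.length_cons, hw2]
            rw [SimpleGraph.Walk.length_cons, hwl] at h3
            omega
  have hall : ∀ x ∈ c.support, ∃ p : ↥P, x = Sum.inr p := by
    intro x hx
    cases x with
    | inl i => exact absurd (hc.rotate hx) (hinl i (c.rotate _ hx))
    | inr p => exact ⟨p, rfl⟩
  obtain ⟨p0, rfl⟩ := hall v c.start_mem_support
  rcases c with _ | ⟨h1, w⟩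
  · exact hc.ne_nil rfl
  rename_i y1
  obtain ⟨p1, rfl⟩ : ∃ p : ↥P, y1 = Sum.inr p := by
    apply hall
    rw [SimpleGraph.Walk.support_cons]
    exact List.mem_cons_of_mem _ w.start_mem_support
  rcases w with _ | ⟨h2, w2⟩
  · have h3 := hc.three_le_length
    rw [SimpleGraph.Walk.length_cons, SimpleGraph.Walk.length_nil] at h3
    omega
  rename_i y2
  obtain ⟨p2, rfl⟩ : ∃ p : ↥P, y2 = Sum.inr p := by
    apply hall
    rw [SimpleGraph.Walk.support_cons, SimpleGraph.Walk.support_cons]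
    exact List.mem_cons_of_mem _ (List.mem_cons_of_mem _ w2.start_mem_support)
  have hwpath : (SimpleGraph.Walk.cons h2 w2).IsPath := by
    apply SimpleGraph.Walk.IsPath.mk'
    have := hc.support_nodup
    rwa [SimpleGraph.Walk.support_cons, List.tail_cons] at this
  have hall' : ∀ x ∈ (SimpleGraph.Walk.cons h2 w2).support, ∃ p : ↥P, x = Sum.inr p := by
    intro x hx
    apply hall
    rw [SimpleGraph.Walk.support_cons]
    exact List.mem_cons_of_mem _ hx
  obtain ⟨d, hd, hsub, hm⟩ := chain hP w2 h2 hwpath hall'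
  have h3 := hc.three_le_length
  rw [SimpleGraph.Walk.length_cons, SimpleGraph.Walk.length_cons] at h3
  rcases hm with ⟨rfl, hnil⟩ | hdw
  · rw [SimpleGraph.Walk.nil_iff_length_eq] at hnil
    omega
  · have hd_ne : d ≠ Sum.inr p1 := by
      rintro rfl
      exact ((SimpleGraph.Walk.cons_isPath_iff _ _).1 hwpath).2 hdw
    have hp0p2 : (Sum.inr p0 : α ⊕ ↥P) ≠ Sum.inr p2 := by
      intro he
      obtain rfl : p0 = p2 := Sum.inr_injective he
      have hw2 : w2.length = 0 :=
        loop_len w2 hwpath.of_cons.support_nodup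
      omega
    have s1 : gset P (Sum.inr p0) (Sum.inr p1) ⊂ gset P (Sum.inr p1) (Sum.inr p2) :=
      key3 hP h1 h2 hp0p2 ⟨p0, rfl⟩ ⟨p1, rfl⟩ ⟨p2, rfl⟩
    have hdmem : ∃ p : ↥P, d = Sum.inr p := by
      apply hall
      rw [SimpleGraph.Walk.support_cons, SimpleGraph.Walk.support_cons]
      exact List.mem_cons_of_mem _ (List.mem_cons_of_mem _ hdw)
    have s3 : gset P d (Sum.inr p0) ⊂ gset P (Sum.inr p0) (Sum.inr p1) :=
      key3 hP hd h1 hd_ne hdmem ⟨p0, rfl⟩ ⟨p1, rfl⟩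
    exact absurd ((ssubset_of_ssubset_of_subset s1 hsub).trans s3) (ssubset_irrefl _)
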